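/- arXiv:1701.02604 — 9 statements merged into one kernel-verified Lean document; each statement's English description precedes it below -/
import Mathlib

section
/- Let n, m ≥ 1 be integers, let a₁,…,aₙ and b₁,…,bₘ be nonzero rational numbers, and let B₁,…,Bₘ, C₁,…,Cₘ, D₁,…,Dₙ, h, u, v be rational numbers with u ≠ 0 and S := ∑_{i=1}^m bᵢBᵢCᵢ² ≠ 0. Define xᵢ = −Dᵢu + h, Xᵢ = Dᵢu + h for 1 ≤ i ≤ n, and yᵢ = Bᵢu + Cᵢv, Yᵢ = −Bᵢu + Cᵢv for 1 ≤ i ≤ m. Then ∑_{i=1}^n aᵢxᵢ⁶ + ∑_{i=1}^m bᵢyᵢ³ = ∑_{i=1}^n aᵢXᵢ⁶ + ∑_{i=1}^m bᵢYᵢ³ holds if and only if v² = (2h ∑_{i=1}^n aᵢDᵢ⁵)/S · u⁴ + ((20h³ ∑_{i=1}^n aᵢDᵢ³ − ∑_{i=1}^m bᵢBᵢ³)/(3S)) · u² + (2h⁵ ∑_{i=1}^n aᵢDᵢ)/S. -/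
/-- The substitution underlying Theorem 1: the equation
`∑ aᵢxᵢ⁶ + ∑ bᵢyᵢ³ = ∑ aᵢXᵢ⁶ + ∑ bᵢYᵢ³` with
`xᵢ = -Dᵢu + h`, `Xᵢ = Dᵢu + h`, `yᵢ = Bᵢu + Cᵢv`, `Yᵢ = -Bᵢu + Cᵢv`
is equivalent to the quartic equation in `(u, v)`. -/
theorem stmt0 (n m : ℕ) (hn : 1 ≤ n) (hm : 1 ≤ m)
    (a D : Fin n → ℚ) (b B C : Fin m → ℚ)
    (ha : ∀ i, a i ≠ 0) (hb : ∀ i, b i ≠ 0)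
    (h u v : ℚ) (hu : u ≠ 0)
    (hS : ∑ i, b i * B i * (C i) ^ 2 ≠ 0)
    (x X : Fin n → ℚ) (y Y : Fin m → ℚ)
    (hx : ∀ i, x i = -(D i) * u + h) (hX : ∀ i, X i = D i * u + h)
    (hy : ∀ i, y i = B i * u + C i * v) (hY : ∀ i, Y i = -(B i) * u + C i * v) :
    ∑ i, a i * (x i) ^ 6 + ∑ i, b i * (y i) ^ 3 =
      ∑ i, a i * (X i) ^ 6 + ∑ i, b i * (Y i) ^ 3 ↔
    v ^ 2 =
      (2 * h * ∑ i, a i * (D i) ^ 5) / (∑ i, b i * B i * (C i) ^ 2) * u ^ 4 +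
      (20 * h ^ 3 * (∑ i, a i * (D i) ^ 3) - ∑ i, b i * (B i) ^ 3) /
        (3 * ∑ i, b i * B i * (C i) ^ 2) * u ^ 2 +
      (2 * h ^ 5 * ∑ i, a i * D i) / (∑ i, b i * B i * (C i) ^ 2) := by
  have h1 : ∑ i, a i * (X i) ^ 6 - ∑ i, a i * (x i) ^ 6 =
      2 * u * (6 * h ^ 5 * (∑ i, a i * D i) + 20 * h ^ 3 * u ^ 2 * (∑ i, a i * (D i) ^ 3)
        + 6 * h * u ^ 4 * (∑ i, a i * (D i) ^ 5)) := by
    rw [← Finset.sum_sub_distrib]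
    simp only [Finset.mul_sum, mul_add, ← Finset.sum_add_distrib]
    refine Finset.sum_congr rfl fun i _ => ?_
    rw [hX i, hx i]; ring
  have h2 : ∑ i, b i * (y i) ^ 3 - ∑ i, b i * (Y i) ^ 3 =
      2 * u * (3 * v ^ 2 * (∑ i, b i * B i * (C i) ^ 2) + u ^ 2 * (∑ i, b i * (B i) ^ 3)) := by
    rw [← Finset.sum_sub_distrib]
    simp only [Finset.mul_sum, mul_add, ← Finset.sum_add_distrib]
    refine Finset.sum_congr rfl fun i _ => ?_
    rw [hy i, hY i]; ring
  constructor
  · intro hE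
    have key : 2 * u * (3 * v ^ 2 * (∑ i, b i * B i * (C i) ^ 2) + u ^ 2 * (∑ i, b i * (B i) ^ 3))
        = 2 * u * (6 * h ^ 5 * (∑ i, a i * D i) + 20 * h ^ 3 * u ^ 2 * (∑ i, a i * (D i) ^ 3)
        + 6 * h * u ^ 4 * (∑ i, a i * (D i) ^ 5)) := by
      rw [← h1, ← h2]; linarith [hE]
    have key2 := mul_left_cancel₀ (mul_ne_zero two_ne_zero hu) key
    have h3S : (3 : ℚ) * ∑ i, b i * B i * (C i) ^ 2 ≠ 0 :=
      mul_ne_zero three_ne_zero hS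
    rw [div_mul_eq_mul_div, div_mul_eq_mul_div, div_add_div _ _ hS h3S,
      div_add_div _ _ (mul_ne_zero hS h3S) hS, eq_div_iff (mul_ne_zero (mul_ne_zero hS h3S) hS)]
    linear_combination ((∑ i, b i * B i * (C i) ^ 2) * (∑ i, b i * B i * (C i) ^ 2)) * key2
  · intro hV
    have key2 : 3 * v ^ 2 * (∑ i, b i * B i * (C i) ^ 2) + u ^ 2 * (∑ i, b i * (B i) ^ 3)
        = 6 * h ^ 5 * (∑ i, a i * D i) + 20 * h ^ 3 * u ^ 2 * (∑ i, a i * (D i) ^ 3)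
        + 6 * h * u ^ 4 * (∑ i, a i * (D i) ^ 5) := by
      rw [hV]; field_simp; ring
    have : ∑ i, b i * (y i) ^ 3 - ∑ i, b i * (Y i) ^ 3 =
        ∑ i, a i * (X i) ^ 6 - ∑ i, a i * (x i) ^ 6 := by
      rw [h1, h2, key2]
    linarith [this]
end

section
/- Let n, m ≥ 1 be integers, let a₁,…,aₙ and b₁,…,bₘ be nonzero rational numbers, and let B₁,…,Bₘ, C₁,…,Cₘ, D₁,…,Dₙ, h, u, v be rational numbers with u ≠ 0 and S := ∑_{i=1}^m bᵢBᵢCᵢ² ≠ 0. Define xᵢ = Dᵢu + h, Xᵢ = −Dᵢu + h for 1 ≤ i ≤ n, and yᵢ = Bᵢu − Cᵢv, Yᵢ = Bᵢu + Cᵢv for 1 ≤ i ≤ m. Then ∑_{i=1}^n aᵢxᵢ⁶ + ∑_{i=1}^m bᵢyᵢ³ = ∑_{i=1}^n aᵢXᵢ⁶ − ∑_{i=1}^m bᵢYᵢ³ holds if and only if v² = (−2h ∑_{i=1}^n aᵢDᵢ⁵)/S · u⁴ − ((20h³ ∑_{i=1}^n aᵢDᵢ³ + ∑_{i=1}^m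 bᵢBᵢ³)/(3S)) · u² − (2h⁵ ∑_{i=1}^n aᵢDᵢ)/S. -/
/-- The substitution underlying Theorem 2: the equation
`∑ aᵢxᵢ⁶ + ∑ bᵢyᵢ³ = ∑ aᵢXᵢ⁶ - ∑ bᵢYᵢ³` with
`xᵢ = Dᵢu + h`, `Xᵢ = -Dᵢu + h`, `yᵢ = Bᵢu - Cᵢv`, `Yᵢ = Bᵢu + Cᵢv`
is equivalent to the quartic equation in `(u, v)`. -/
theorem stmt1 (n m : ℕ) (hn : 1 ≤ n) (hm : 1 ≤ m)
    (a D : Fin n → ℚ) (b B C : Fin m → ℚ)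
    (ha : ∀ i, a i ≠ 0) (hb : ∀ i, b i ≠ 0)
    (h u v : ℚ) (hu : u ≠ 0)
    (hS : ∑ i, b i * B i * (C i) ^ 2 ≠ 0)
    (x X : Fin n → ℚ) (y Y : Fin m → ℚ)
    (hx : ∀ i, x i = D i * u + h) (hX : ∀ i, X i = -(D i) * u + h)
    (hy : ∀ i, y i = B i * u - C i * v) (hY : ∀ i, Y i = B i * u + C i * v) :
    ∑ i, a i * (x i) ^ 6 + ∑ i, b i * (y i) ^ 3 =
      ∑ i, a i * (X i) ^ 6 - ∑ i, b i * (Y i) ^ 3 ↔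
    v ^ 2 =
      (-2 * h * ∑ i, a i * (D i) ^ 5) / (∑ i, b i * B i * (C i) ^ 2) * u ^ 4 -
      (20 * h ^ 3 * (∑ i, a i * (D i) ^ 3) + ∑ i, b i * (B i) ^ 3) /
        (3 * ∑ i, b i * B i * (C i) ^ 2) * u ^ 2 -
      (2 * h ^ 5 * ∑ i, a i * D i) / (∑ i, b i * B i * (C i) ^ 2) := by
  set S := ∑ i, b i * B i * (C i) ^ 2 with hSdef
  have e1 : ∑ i, a i * (x i) ^ 6 - ∑ i, a i * (X i) ^ 6 =
      12 * h * u ^ 5 * (∑ i, a i * (D i) ^ 5) +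
      40 * h ^ 3 * u ^ 3 * (∑ i, a i * (D i) ^ 3) +
      12 * h ^ 5 * u * (∑ i, a i * D i) := by
    rw [← Finset.sum_sub_distrib, Finset.mul_sum, Finset.mul_sum, Finset.mul_sum,
      ← Finset.sum_add_distrib, ← Finset.sum_add_distrib]
    apply Finset.sum_congr rfl
    intro i _
    rw [hx, hX]; ring
  have e2 : ∑ i, b i * (y i) ^ 3 + ∑ i, b i * (Y i) ^ 3 =
      2 * u ^ 3 * (∑ i, b i * (B i) ^ 3) + 6 * u * v ^ 2 * S := by
    rw [← Finset.sum_add_distrib, Finset.mul_sum, Finset.mul_sum, ← Finset.sum_add_distrib]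
    apply Finset.sum_congr rfl
    intro i _
    rw [hy, hY]; ring
  have key : (∑ i, a i * (x i) ^ 6 + ∑ i, b i * (y i) ^ 3) -
      (∑ i, a i * (X i) ^ 6 - ∑ i, b i * (Y i) ^ 3) =
      6 * u * S * (v ^ 2 -
        ((-2 * h * ∑ i, a i * (D i) ^ 5) / S * u ^ 4 -
        (20 * h ^ 3 * (∑ i, a i * (D i) ^ 3) + ∑ i, b i * (B i) ^ 3) / (3 * S) * u ^ 2 -
        (2 * h ^ 5 * ∑ i, a i * D i) / S)) := by
    have : (∑ i, a i * (x i) ^ 6 + ∑ i, b i * (y i) ^ 3) -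
        (∑ i, a i * (X i) ^ 6 - ∑ i, b i * (Y i) ^ 3) =
        (∑ i, a i * (x i) ^ 6 - ∑ i, a i * (X i) ^ 6) +
        (∑ i, b i * (y i) ^ 3 + ∑ i, b i * (Y i) ^ 3) := by ring
    rw [this, e1, e2]
    field_simp
    ring
  constructor
  · intro heq
    have h0 : 6 * u * S * (v ^ 2 -
        ((-2 * h * ∑ i, a i * (D i) ^ 5) / S * u ^ 4 -
        (20 * h ^ 3 * (∑ i, a i * (D i) ^ 3) + ∑ i, b i * (B i) ^ 3) / (3 * S) * u ^ 2 -
        (2 * h ^ 5 * ∑ i, a i * D i) / S)) = 0 := by rw [← key]; rw [heq]; ring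
    rcases mul_eq_zero.mp h0 with h1 | h1
    · rcases mul_eq_zero.mp h1 with h2 | h2
      · rcases mul_eq_zero.mp h2 with h3 | h3
        · norm_num at h3
        · exact absurd h3 hu
      · exact absurd h2 hS
    · linarith [sub_eq_zero.mp h1]
  · intro heq
    have h0 : (∑ i, a i * (x i) ^ 6 + ∑ i, b i * (y i) ^ 3) -
        (∑ i, a i * (X i) ^ 6 - ∑ i, b i * (Y i) ^ 3) = 0 := by
      rw [key, heq]; ring
    linarith
end

section
/- There exist infinitely many quadruples (x, y, X, Y) of positive integers with x ≠ X satisfying x⁶ + y³ = X⁶ + Y³. -/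
/-- There are infinitely many quadruples of positive integers `(x, y, X, Y)` with `x ≠ X`
satisfying `x⁶ + y³ = X⁶ + Y³`. -/
theorem stmt7 :
    {p : ℕ × ℕ × ℕ × ℕ | 0 < p.1 ∧ 0 < p.2.1 ∧ 0 < p.2.2.1 ∧ 0 < p.2.2.2 ∧
      p.1 ≠ p.2.2.1 ∧
      p.1 ^ 6 + p.2.1 ^ 3 = p.2.2.1 ^ 6 + p.2.2.2 ^ 3}.Infinite := by
  apply Set.infinite_of_injective_forall_mem
    (f := fun k : ℕ => ((k + 1), 12 * (k + 1) ^ 2, 3 * (k + 1), 10 * (k + 1) ^ 2))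
  case hi =>
    intro a b h
    simpa using congrArg Prod.fst h
  case hf =>
    intro k
    exact ⟨by positivity, by positivity, by positivity, by positivity, by dsimp only; omega, by ring⟩
end

section
/- There exist infinitely many quadruples (x, y, X, Y) of positive integers with x ≠ X satisfying 2x⁶ + y³ = 2X⁶ + Y³. -/
/-- There are infinitely many quadruples of positive integers `(x, y, X, Y)` with `x ≠ X`
satisfying `2x⁶ + y³ = 2X⁶ + Y³`. -/
theorem stmt8 :
    {p : ℕ × ℕ × ℕ × ℕ | 0 < p.1 ∧ 0 < p.2.1 ∧ 0 < p.2.2.1 ∧ 0 < p.2.2.2 ∧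
      p.1 ≠ p.2.2.1 ∧
      2 * p.1 ^ 6 + p.2.1 ^ 3 = 2 * p.2.2.1 ^ 6 + p.2.2.2 ^ 3}.Infinite := by
  apply Set.infinite_of_injective_forall_mem
    (f := fun k : ℕ => (15 * (k+1), 1380 * (k+1)^2, 33 * (k+1), 408 * (k+1)^2))
  case hi =>
    intro a b h
    simp only [Prod.mk.injEq] at h
    omega
  case hf =>
    intro k
    refine ⟨by positivity, by positivity, by positivity, by positivity, show 15*(k+1) ≠ 33*(k+1) by omega, by ring⟩
end

section
/- There exist infinitely many quadruples (x, y, X, Y) of positive integers with x ≠ X satisfying x⁶ + 7y³ = X⁶ + 7Y³. -/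
/-- There are infinitely many quadruples of positive integers `(x, y, X, Y)` with `x ≠ X`
satisfying `x⁶ + 7y³ = X⁶ + 7Y³`. -/
theorem stmt9 :
    {p : ℕ × ℕ × ℕ × ℕ | 0 < p.1 ∧ 0 < p.2.1 ∧ 0 < p.2.2.1 ∧ 0 < p.2.2.2 ∧
      p.1 ≠ p.2.2.1 ∧
      p.1 ^ 6 + 7 * p.2.1 ^ 3 = p.2.2.1 ^ 6 + 7 * p.2.2.2 ^ 3}.Infinite := by
  apply Set.infinite_of_injective_forall_mem
    (f := fun n : ℕ => (7*(n+1)^2, 140*(n+1)^4, 14*(n+1)^2, 119*(n+1)^4))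
  · intro a b h
    simp only [Prod.mk.injEq] at h
    have := h.1
    nlinarith [this]
  · intro n
    refine ⟨by positivity, by positivity, by positivity, by positivity, ?_, by ring⟩
    intro h
    simp only at h
    have hp : 0 < (n+1)^2 := by positivity
    omega
end

section
/- The point P = (−48, 80) lies on the elliptic curve Y² = X³ + 53X² − 1024X − 54272 over ℚ and has infinite order in the group of rational points of this curve. -/
/-- The elliptic curve `Y² = X³ + 53X² - 1024X - 54272` over `ℚ`. -/
def W10 : WeierstrassCurve.Affine ℚ :=
  { a₁ := 0, a₂ := 53, a₃ := 0, a₄ := -1024, a₆ := -54272 }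

open WeierstrassCurve.Affine WeierstrassCurve.Affine.Point

lemma W10_equation_iff {x y : ℚ} :
    W10.Equation x y ↔ y ^ 2 = x ^ 3 + 53 * x ^ 2 - 1024 * x - 54272 := by
  rw [equation_iff]
  simp only [W10]
  constructor <;> intro h <;> linarith

lemma W10_negY (x y : ℚ) : W10.negY x y = -y := by
  simp [negY, W10]

lemma hP : W10.Nonsingular (-48) 80 := by
  rw [nonsingular_iff, W10_equation_iff]
  norm_num [W10]

lemma sq_of_double (Q : W10.Point) {x y : ℚ} (h : W10.Nonsingular x y)
    (hadd : Q + Q = Point.some _ _ h) :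
    IsSquare (x - 32) ∧ IsSquare (x + 32) ∧ IsSquare (x + 53) := by
  match Q with
  | Point.zero =>
    rw [← zero_def, add_zero] at hadd
    exact absurd hadd.symm (some_ne_zero h)
  | @Point.some _ _ _ u v hQ =>
    have hv : v ≠ 0 := by
      intro h0
      rw [add_self_of_Y_eq (by rw [W10_negY, h0]; norm_num)] at hadd
      exact some_ne_zero h hadd.symm
    have hy : v ≠ W10.negY u v := by rw [W10_negY]; intro h'; exact hv (by linarith)
    rw [add_self_of_Y_ne hy] at hadd
    rw [Point.some.injEq] at hadd
    obtain ⟨hx, -, -⟩ := hadd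
    have hslope : W10.slope u u v v = (3 * u ^ 2 + 106 * u - 1024) / (2 * v) := by
      rw [slope_of_Y_ne rfl hy, W10_negY]
      simp only [W10]
      ring_nf
    have heq : v ^ 2 = u ^ 3 + 53 * u ^ 2 - 1024 * u - 54272 := W10_equation_iff.mp hQ.1
    have hxval : x = ((3 * u ^ 2 + 106 * u - 1024) / (2 * v)) ^ 2 - 53 - 2 * u := by
      rw [← hx, addX, hslope]
      simp only [W10]
      ring
    have h2v : (2 * v) * (2 * v) ≠ 0 := by
      have : (2 : ℚ) * v ≠ 0 := by simpa using hv
      exact mul_ne_zero this this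
    have hxval' : x * (4 * v ^ 2) =
        (3 * u ^ 2 + 106 * u - 1024) ^ 2 - (53 + 2 * u) * (4 * v ^ 2) := by
      rw [hxval]; field_simp; ring
    refine ⟨⟨(u ^ 2 - 64 * u - 4416) / (2 * v), ?_⟩,
            ⟨(u ^ 2 + 64 * u + 2368) / (2 * v), ?_⟩,
            ⟨(u ^ 2 + 106 * u + 1024) / (2 * v), ?_⟩⟩
    · rw [div_mul_div_comm, eq_div_iff h2v]
      linear_combination hxval' - 4 * (85 + 2 * u) * heq
    · rw [div_mul_div_comm, eq_div_iff h2v]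
      linear_combination hxval' - 4 * (21 + 2 * u) * heq
    · rw [div_mul_div_comm, eq_div_iff h2v]
      linear_combination hxval' - 8 * u * heq

lemma two_torsion {x y : ℚ} (h : W10.Nonsingular x y)
    (hadd : Point.some _ _ h + Point.some _ _ h = 0) :
    y = 0 ∧ (x = 32 ∨ x = -32 ∨ x = -53) := by
  have hy : y = W10.negY x y := by
    by_contra hy
    rw [add_self_of_Y_ne hy] at hadd
    exact some_ne_zero _ hadd
  rw [W10_negY] at hy
  have hy0 : y = 0 := by linarith
  subst hy0
  refine ⟨rfl, ?_⟩
  have heq : (0 : ℚ) ^ 2 = x ^ 3 + 53 * x ^ 2 - 1024 * x - 54272 := W10_equation_iff.mp h.1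
  have hfac : (x - 32) * ((x + 32) * (x + 53)) = 0 := by linear_combination -heq
  rcases mul_eq_zero.mp hfac with h' | h'
  · left; linarith
  · rcases mul_eq_zero.mp h' with h'' | h''
    · right; left; linarith
    · right; right; linarith

lemma odd_nsmul_self {S : W10.Point} (h2 : S + S = 0) {b : ℕ} (hb : Odd b) : b • S = S := by
  obtain ⟨k, rfl⟩ := hb
  rw [add_nsmul, one_nsmul, mul_nsmul, two_nsmul, h2, nsmul_zero, zero_add]

lemma half_of_odd (S : W10.Point) {b : ℕ} (hb : Odd b) (hS : b • S = 0) :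
    ∃ Q : W10.Point, Q + Q = S := by
  obtain ⟨k, hk⟩ := hb
  refine ⟨(k + 1) • S, ?_⟩
  rw [← add_nsmul]
  have : k + 1 + (k + 1) = (2 * k + 1) + 1 := by ring
  rw [this, add_nsmul, ← hk, hS, zero_add, one_nsmul]

lemma not_sq_neg {q : ℚ} (hq : q < 0) : ¬ IsSquare q := by
  rintro ⟨r, hr⟩
  nlinarith [mul_self_nonneg r]

lemma not_sq_nat {n : ℕ} (hn : ¬ IsSquare n) : ¬ IsSquare ((n : ℚ)) := by
  rwa [Rat.isSquare_natCast_iff]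

lemma no_order_four (S : W10.Point) (h4 : (S + S) + (S + S) = 0) : S + S = 0 := by
  by_contra hne
  match hT : S + S with
  | Point.zero => rw [hT, zero_def] at hne; exact hne rfl
  | @Point.some _ _ _ x y hS' =>
    rw [hT] at h4
    obtain ⟨hy0, hx⟩ := two_torsion hS' h4
    obtain ⟨hsq1, hsq2, hsq3⟩ := sq_of_double S hS' hT
    rcases hx with rfl | rfl | rfl
    · refine not_sq_nat (n := 85) ?_ ?_
      · rintro ⟨r, hr⟩
        have h9 : r ≤ 9 := by nlinarith
        interval_cases r <;> omega
      · convert hsq3 using 2 <;> norm_num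
    · exact not_sq_neg (by norm_num) hsq1
    · exact not_sq_neg (by norm_num) hsq1

lemma two_smul_of_two_pow_smul : ∀ (a : ℕ) (S : W10.Point), 2 ^ a • S = 0 → S + S = 0 := by
  intro a
  induction a with
  | zero =>
    intro S hS
    rw [pow_zero, one_nsmul] at hS
    rw [hS, add_zero]
  | succ a ih =>
    intro S hS
    rw [pow_succ', mul_nsmul, two_nsmul] at hS
    exact no_order_four S (ih (S + S) hS)

/-- The point `(-48, 80)` lies on `Y² = X³ + 53X² - 1024X - 54272` and has infinite order. -/
theorem stmt10 : W10.Equation (-48) 80 ∧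
    ∃ h : W10.Nonsingular (-48) 80,
      ¬ IsOfFinAddOrder (WeierstrassCurve.Affine.Point.some _ _ h) := by
  refine ⟨W10_equation_iff.mpr (by norm_num), hP, ?_⟩
  intro hfin
  obtain ⟨n, hn, hsmul⟩ := isOfFinAddOrder_iff_nsmul_eq_zero.mp hfin
  obtain ⟨a, b, hb, rfl⟩ := Nat.exists_eq_two_pow_mul_odd hn.ne'
  rw [mul_comm, mul_nsmul] at hsmul
  have hSS : (b • Point.some _ _ hP) + (b • Point.some _ _ hP) = 0 :=
    two_smul_of_two_pow_smul a _ hsmul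
  match hT : b • (Point.some _ _ hP : W10.Point) with
  | Point.zero =>
    obtain ⟨Q, hQ⟩ := half_of_odd _ hb (hT.trans zero_def.symm)
    obtain ⟨hsq1, -, -⟩ := sq_of_double Q hP hQ
    exact not_sq_neg (by norm_num) hsq1
  | @Point.some _ _ _ xs ys hS =>
    rw [hT] at hSS
    obtain ⟨hy0, hx⟩ := two_torsion hS hSS
    subst hy0
    have hbR : b • (Point.some _ _ hP + Point.some _ _ hS) = 0 := by
      rw [nsmul_add, hT, odd_nsmul_self hSS hb, hSS]
    obtain ⟨Q, hQ⟩ := half_of_odd _ hb hbR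
    rcases hx with rfl | rfl | rfl
    · rw [add_of_X_ne (by norm_num : (-48 : ℚ) ≠ 32)] at hQ
      obtain ⟨-, hsq2, -⟩ := sq_of_double Q _ hQ
      have hxval : W10.addX (-48) 32 (W10.slope (-48) 32 80 0) = -36 := by
        rw [slope_of_X_ne (by norm_num : (-48 : ℚ) ≠ 32)]
        simp only [addX, W10]
        norm_num
      rw [hxval] at hsq2
      exact not_sq_neg (by norm_num) hsq2
    · rw [add_of_X_ne (by norm_num : (-48 : ℚ) ≠ -32)] at hQ
      obtain ⟨hsq1, -, -⟩ := sq_of_double Q _ hQ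
      have hxval : W10.addX (-48) (-32) (W10.slope (-48) (-32) 80 0) = 52 := by
        rw [slope_of_X_ne (by norm_num : (-48 : ℚ) ≠ -32)]
        simp only [addX, W10]
        norm_num
      rw [hxval] at hsq1
      refine not_sq_nat (n := 20) ?_ ?_
      · rintro ⟨r, hr⟩
        have h9 : r ≤ 5 := by nlinarith
        interval_cases r <;> omega
      · convert hsq1 using 2 <;> norm_num
    · rw [add_of_X_ne (by norm_num : (-48 : ℚ) ≠ -53)] at hQ
      obtain ⟨hsq1, -, -⟩ := sq_of_double Q _ hQ
      have hxval : W10.addX (-48) (-53) (W10.slope (-48) (-53) 80 0) = 304 := by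
        rw [slope_of_X_ne (by norm_num : (-48 : ℚ) ≠ -53)]
        simp only [addX, W10]
        norm_num
      rw [hxval] at hsq1
      refine not_sq_nat (n := 272) ?_ ?_
      · rintro ⟨r, hr⟩
        have h9 : r ≤ 17 := by nlinarith
        interval_cases r <;> omega
      · convert hsq1 using 2 <;> norm_num
end

section
/- The point P₁ = (−1792/243, 3328/2187) lies on the elliptic curve Y² = X³ + (1831/243)X² − (262144/6561)X − 479985664/1594323 over ℚ and has infinite order in the group of rational points of this curve. -/
/-- The elliptic curve `Y² = X³ + (1831/243)X² - (262144/6561)X - 479985664/1594323` over `ℚ`. -/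
def W11 : WeierstrassCurve.Affine ℚ :=
  { a₁ := 0, a₂ := 1831 / 243, a₃ := 0, a₄ := -262144 / 6561, a₆ := -479985664 / 1594323 }

namespace EC11aux

open WeierstrassCurve.Affine

/-- Lower bound for the 2-adic valuation of a sum. -/
lemma v2_min {q r : ℚ} {c : ℤ} (hq : c ≤ padicValRat 2 q ∨ q = 0)
    (hr : c ≤ padicValRat 2 r ∨ r = 0) :
    c ≤ padicValRat 2 (q + r) ∨ q + r = 0 := by
  rcases hq with hq | hq
  · rcases hr with hr | hr
    · by_cases h0 : q + r = 0
      · exact Or.inr h0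
      · exact Or.inl (le_trans (le_min hq hr) (padicValRat.min_le_padicValRat_add h0))
    · subst hr; simpa using Or.inl hq
  · subst hq; simpa using hr

lemma or_weaken {q : ℚ} {c c' : ℤ} (h : c ≤ c') (hq : c' ≤ padicValRat 2 q ∨ q = 0) :
    c ≤ padicValRat 2 q ∨ q = 0 :=
  hq.imp (fun h' => le_trans h h') id

/-- Exact 2-adic valuation of a sum where the first term has strictly smaller valuation. -/
lemma v2_add {q r : ℚ} {c : ℤ} (hq : q ≠ 0) (hqc : padicValRat 2 q < c)
    (hr : c ≤ padicValRat 2 r ∨ r = 0) :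
    q + r ≠ 0 ∧ padicValRat 2 (q + r) = padicValRat 2 q := by
  by_cases hr0 : r = 0
  · subst hr0; simpa using hq
  · rcases hr with hr | hr
    swap
    · exact absurd hr hr0
    have hlt : padicValRat 2 q < padicValRat 2 r := lt_of_lt_of_le hqc hr
    have hqr : q + r ≠ 0 := by
      intro h0
      have hrq : r = -q := by linarith [eq_neg_of_add_eq_zero_right h0]
      rw [hrq, padicValRat.neg] at hlt
      exact lt_irrefl _ hlt
    exact ⟨hqr, padicValRat.add_eq_of_lt hqr hq hr0 hlt⟩

lemma v2_int_odd {a : ℤ} (ha : Odd a) : padicValRat 2 (a : ℚ) = 0 := by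
  obtain ⟨c, rfl⟩ := ha
  have h2 : ¬ ((2 : ℕ) : ℤ) ∣ 2 * c + 1 := by omega
  rw [padicValRat.of_int, padicValInt.eq_zero_of_not_dvd h2]
  simp

lemma v2_two : padicValRat 2 (2 : ℚ) = 1 := padicValRat.self one_lt_two

/-- v₂ (2^k * a / b) = k for odd integers a, b. -/
lemma v2_eq_pos {a b : ℤ} (k : ℕ) (ha : Odd a) (hb : Odd b) :
    padicValRat 2 ((2 : ℚ) ^ k * a / b) = k := by
  have ha0 : (a : ℚ) ≠ 0 := by
    rintro h0
    rw [Int.cast_eq_zero] at h0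
    subst h0
    simpa using ha
  have hb0 : (b : ℚ) ≠ 0 := by
    rintro h0
    rw [Int.cast_eq_zero] at h0
    subst h0
    simpa using hb
  have h2 : (2 : ℚ) ^ k ≠ 0 := by positivity
  rw [padicValRat.div (mul_ne_zero h2 ha0) hb0, padicValRat.mul h2 ha0,
    padicValRat.pow (2 : ℚ), v2_two, v2_int_odd ha, v2_int_odd hb]
  ring

/-- v₂ (a / (2^k * b)) = -k for odd integers a, b. -/
lemma v2_eq_neg {a b : ℤ} (k : ℕ) (ha : Odd a) (hb : Odd b) :
    padicValRat 2 ((a : ℚ) / ((2 : ℚ) ^ k * b)) = -k := by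
  have ha0 : (a : ℚ) ≠ 0 := by
    rintro h0
    rw [Int.cast_eq_zero] at h0
    subst h0
    simpa using ha
  have hb0 : (b : ℚ) ≠ 0 := by
    rintro h0
    rw [Int.cast_eq_zero] at h0
    subst h0
    simpa using hb
  have h2 : (2 : ℚ) ^ k ≠ 0 := by positivity
  rw [padicValRat.div ha0 (mul_ne_zero h2 hb0), padicValRat.mul h2 hb0,
    padicValRat.pow (2 : ℚ), v2_two, v2_int_odd ha, v2_int_odd hb]
  ring

lemma v2_a2 : padicValRat 2 ((1831 : ℚ) / 243) = 0 := by
  have h : ((1831 : ℚ) / 243) = ((2 : ℚ) ^ 0 * ((1831 : ℤ) : ℚ) / ((243 : ℤ) : ℚ)) := by norm_num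
  rw [h, v2_eq_pos 0 (by decide) (by decide)]
  norm_num

lemma v2_a4 : padicValRat 2 ((-262144 : ℚ) / 6561) = 18 := by
  have h : ((-262144 : ℚ) / 6561) = -((2 : ℚ) ^ 18 * ((1 : ℤ) : ℚ) / ((6561 : ℤ) : ℚ)) := by
    norm_num
  rw [h, padicValRat.neg, v2_eq_pos 18 (by decide) (by decide)]
  norm_num

lemma v2_a6 : padicValRat 2 ((-479985664 : ℚ) / 1594323) = 18 := by
  have h : ((-479985664 : ℚ) / 1594323) =
      -((2 : ℚ) ^ 18 * ((1831 : ℤ) : ℚ) / ((1594323 : ℤ) : ℚ)) := by norm_num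
  rw [h, padicValRat.neg, v2_eq_pos 18 (by decide) (by decide)]
  norm_num

lemma v2_c : padicValRat 2 ((3662 : ℚ) / 243) = 1 := by
  have h : ((3662 : ℚ) / 243) = ((2 : ℚ) ^ 1 * ((1831 : ℤ) : ℚ) / ((243 : ℤ) : ℚ)) := by norm_num
  rw [h, v2_eq_pos 1 (by decide) (by decide)]
  norm_num

lemma some_eq_some {x₁ y₁ x₂ y₂ : ℚ} (h₁ : W11.Nonsingular x₁ y₁) (h₂ : W11.Nonsingular x₂ y₂)
    (hx : x₁ = x₂) (hy : y₁ = y₂) : Point.some _ _ h₁ = Point.some _ _ h₂ := by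
  subst hx; subst hy; rfl

/-- x-coordinate extractor (0 for the point at infinity). -/
def toX : W11.Point → ℚ
  | Point.zero => 0
  | Point.some x _ _ => x

/-- Key doubling lemma: doubling a point with v₂(x) = -2m (m ≥ 1) gives a point with
v₂(x) = -2(m+1). -/
lemma key {x y : ℚ} (h : W11.Nonsingular x y) {m : ℤ} (hm : 1 ≤ m)
    (hv : padicValRat 2 x = -(2 * m)) :
    ∃ (x' y' : ℚ) (h' : W11.Nonsingular x' y'),
      (Point.some _ _ h + Point.some _ _ h : W11.Point) = Point.some _ _ h' ∧
        padicValRat 2 x' = -(2 * (m + 1)) := by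
  have hx0 : x ≠ 0 := by
    rintro rfl
    rw [padicValRat.zero] at hv
    omega
  have hE : W11.Equation x y := ((W11.nonsingular_iff' x y).mp h).1
  have hyy : y ^ 2 = x ^ 3 + ((1831 / 243) * x ^ 2 +
      ((-262144 / 6561) * x + (-479985664 / 1594323))) := by
    have h1 := (W11.equation_iff x y).mp hE
    simp only [W11] at h1
    linear_combination h1
  have hx2 : (x ^ 2 : ℚ) ≠ 0 := pow_ne_zero _ hx0
  have hx3 : (x ^ 3 : ℚ) ≠ 0 := pow_ne_zero _ hx0
  have vx2 : padicValRat 2 (x ^ 2) = -(4 * m) := by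
    rw [padicValRat.pow x, hv]; ring
  have vx3 : padicValRat 2 (x ^ 3) = -(6 * m) := by
    rw [padicValRat.pow x, hv]; ring
  have hc2 : ((1831 : ℚ) / 243) ≠ 0 := by norm_num
  have hc4 : ((-262144 : ℚ) / 6561) ≠ 0 := by norm_num
  have hc6 : ((-479985664 : ℚ) / 1594323) ≠ 0 := by norm_num
  have va2x2 : padicValRat 2 ((1831 / 243) * x ^ 2) = -(4 * m) := by
    rw [padicValRat.mul hc2 hx2, v2_a2, vx2]; ring
  have va4x : padicValRat 2 ((-262144 / 6561) * x) = 18 - 2 * m := by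
    rw [padicValRat.mul hc4 hx0, v2_a4, hv]; ring
  -- valuation of y²
  have hs : (18 - 2 * m : ℤ) ≤ padicValRat 2 ((-262144 / 6561) * x + (-479985664 / 1594323))
      ∨ ((-262144 / 6561) * x + (-479985664 / 1594323) : ℚ) = 0 :=
    v2_min (Or.inl (le_of_eq va4x.symm)) (Or.inl (by rw [v2_a6]; omega))
  have hr : (-(4 * m) : ℤ) ≤ padicValRat 2 ((1831 / 243) * x ^ 2 +
      ((-262144 / 6561) * x + (-479985664 / 1594323)))
      ∨ ((1831 / 243) * x ^ 2 + ((-262144 / 6561) * x + (-479985664 / 1594323)) : ℚ) = 0 :=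
    v2_min (Or.inl (le_of_eq va2x2.symm)) (or_weaken (by omega) hs)
  have hf := v2_add (c := -(4 * m)) hx3 (by rw [vx3]; omega) hr
  have vy2 : padicValRat 2 (y ^ 2) = -(6 * m) := by rw [hyy, hf.2, vx3]
  have hy0 : y ≠ 0 := by
    rintro rfl
    rw [zero_pow (two_ne_zero), padicValRat.zero] at vy2
    omega
  have vy : padicValRat 2 y = -(3 * m) := by
    have h2 := padicValRat.pow (p := 2) y (k := 2)
    rw [vy2] at h2
    omega
  have hyneg : y ≠ W11.negY x y := by
    intro hc
    apply hy0
    simp only [negY, W11] at hc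
    linarith [hc]
  -- valuation of the slope
  have hl : W11.slope x x y y = (3 * x ^ 2 + ((3662 / 243) * x + (-262144 / 6561))) / (2 * y) := by
    rw [slope_of_Y_ne rfl hyneg]
    simp only [negY, W11]
    ring
  have v3x2 : padicValRat 2 (3 * x ^ 2) = -(4 * m) := by
    rw [padicValRat.mul (by norm_num) hx2, vx2, show ((3 : ℚ)) = ((3 : ℤ) : ℚ) by norm_num,
      v2_int_odd (by decide)]
    ring
  have vcx : padicValRat 2 ((3662 / 243) * x) = 1 - 2 * m := by
    rw [padicValRat.mul (by norm_num) hx0, v2_c, hv]; ring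
  have hnum := v2_add (q := 3 * x ^ 2) (c := 1 - 2 * m) (mul_ne_zero (by norm_num) hx2)
      (by rw [v3x2]; omega)
      (v2_min (Or.inl (le_of_eq vcx.symm)) (Or.inl (by rw [v2_a4]; omega)))
  have hden : (2 * y : ℚ) ≠ 0 := mul_ne_zero two_ne_zero hy0
  have vden : padicValRat 2 (2 * y) = 1 - 3 * m := by
    rw [padicValRat.mul two_ne_zero hy0, v2_two, vy]; ring
  have vl : padicValRat 2 (W11.slope x x y y) = -(m + 1) := by
    rw [hl, padicValRat.div hnum.1 hden, hnum.2, v3x2, vden]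
    ring
  have hl0 : W11.slope x x y y ≠ 0 := by
    intro hc
    rw [hc, padicValRat.zero] at vl
    omega
  have vl2 : padicValRat 2 ((W11.slope x x y y) ^ 2) = -(2 * m + 2) := by
    rw [padicValRat.pow (W11.slope x x y y), vl]; ring
  -- valuation of the new x-coordinate
  have hX : W11.addX x x (W11.slope x x y y) =
      (W11.slope x x y y) ^ 2 + (-(1831 / 243) + (-2) * x) := by
    simp only [addX, W11]
    ring
  have vm2x : padicValRat 2 ((-2 : ℚ) * x) = 1 - 2 * m := by
    rw [padicValRat.mul (by norm_num) hx0, show ((-2 : ℚ)) = -(2 : ℚ) by norm_num,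
      padicValRat.neg, v2_two, hv]
    ring
  have vneg_a2 : padicValRat 2 (-(1831 / 243) : ℚ) = 0 := by
    rw [padicValRat.neg, v2_a2]
  have hXv := v2_add (c := 1 - 2 * m) (pow_ne_zero _ hl0) (by rw [vl2]; omega)
      (v2_min (Or.inl (by rw [vneg_a2]; omega)) (Or.inl (le_of_eq vm2x.symm)))
  refine ⟨_, _, nonsingular_add h h (fun hxy => hyneg hxy.right), Point.add_self_of_Y_ne hyneg, ?_⟩
  rw [hX, hXv.2, vl2]
  ring

/-- Iterated doubling: valuations go down forever. -/
lemma chain {x y : ℚ} (h : W11.Nonsingular x y) (hv : padicValRat 2 x = -(2 * 2)) :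
    ∀ k : ℕ, ∃ (x' y' : ℚ) (h' : W11.Nonsingular x' y'),
      ((2 ^ k • Point.some _ _ h : W11.Point) = Point.some _ _ h') ∧
        padicValRat 2 x' = -(2 * (2 + (k : ℤ))) := by
  intro k
  induction k with
  | zero =>
    refine ⟨x, y, h, by rw [pow_zero, one_nsmul], ?_⟩
    rw [hv]; norm_num
  | succ n ih =>
    obtain ⟨xn, yn, hn, en, vn⟩ := ih
    obtain ⟨x', y', h', e', v'⟩ := key hn (m := 2 + (n : ℤ)) (by omega) vn
    refine ⟨x', y', h', ?_, ?_⟩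
    · rw [pow_succ, mul_nsmul, en, two_nsmul, e']
    · rw [v']; push_cast; ring

end EC11aux

open EC11aux WeierstrassCurve.Affine in
/-- The point `P₁ = (-1792/243, 3328/2187)` lies on the curve and has infinite order. -/
theorem stmt11 : W11.Equation (-1792 / 243) (3328 / 2187) ∧
    ∃ h : W11.Nonsingular (-1792 / 243) (3328 / 2187),
      ¬ IsOfFinAddOrder (WeierstrassCurve.Affine.Point.some _ _ h) := by
  have hP : W11.Nonsingular (-1792 / 243) (3328 / 2187) := by
    rw [W11.nonsingular_iff]
    constructor
    · rw [W11.equation_iff]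
      norm_num [W11]
    · right
      norm_num [W11]
  refine ⟨((W11.nonsingular_iff' _ _).mp hP).1, hP, ?_⟩
  intro hfin
  -- explicit small multiples
  have h2 : W11.Nonsingular (16708 / 729) (-2392940 / 19683) := by
    rw [W11.nonsingular_iff]
    constructor
    · rw [W11.equation_iff]
      norm_num [W11]
    · right
      norm_num [W11]
  have h3 : W11.Nonsingular (-48649964032 / 7406990163) (215295711647744 / 122681978069769) := by
    rw [W11.nonsingular_iff]
    constructor
    · rw [W11.equation_iff]
      norm_num [W11]
    · right
      norm_num [W11]
  have h6 : W11.Nonsingular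
      (2710039235354333119188061813933777 / 209242386338142624935394392168976)
      (154867437900539954854556692298960809811005789624415 /
        3026735681243498448282568364595585634670591116224) := by
    rw [W11.nonsingular_iff]
    constructor
    · rw [W11.equation_iff]
      norm_num [W11]
    · right
      norm_num [W11]
  have hy1 : (3328 / 2187 : ℚ) ≠ W11.negY (-1792 / 243) (3328 / 2187) := by
    simp only [WeierstrassCurve.Affine.negY, W11]
    norm_num
  have e2 : (Point.some _ _ hP + Point.some _ _ hP : W11.Point) = Point.some _ _ h2 := by
    rw [Point.add_self_of_Y_ne hy1]
    refine some_eq_some _ _ ?_ ?_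
    · rw [slope_of_Y_ne rfl hy1]
      simp only [WeierstrassCurve.Affine.negY, WeierstrassCurve.Affine.addX, W11]
      norm_num
    · rw [slope_of_Y_ne rfl hy1]
      simp only [WeierstrassCurve.Affine.negY, WeierstrassCurve.Affine.addY,
        WeierstrassCurve.Affine.negAddY, WeierstrassCurve.Affine.addX, W11]
      norm_num
  have hx23 : (16708 / 729 : ℚ) ≠ (-1792 / 243 : ℚ) := by norm_num
  have e3 : (Point.some _ _ h2 + Point.some _ _ hP : W11.Point) = Point.some _ _ h3 := by
    rw [Point.add_of_X_ne hx23]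
    refine some_eq_some _ _ ?_ ?_
    · rw [slope_of_X_ne hx23]
      simp only [WeierstrassCurve.Affine.addX, W11]
      norm_num
    · rw [slope_of_X_ne hx23]
      simp only [WeierstrassCurve.Affine.negY, WeierstrassCurve.Affine.addY,
        WeierstrassCurve.Affine.negAddY, WeierstrassCurve.Affine.addX, W11]
      norm_num
  have hy3 : (215295711647744 / 122681978069769 : ℚ) ≠
      W11.negY (-48649964032 / 7406990163) (215295711647744 / 122681978069769) := by
    simp only [WeierstrassCurve.Affine.negY, W11]
    norm_num
  have e6 : (Point.some _ _ h3 + Point.some _ _ h3 : W11.Point) = Point.some _ _ h6 := by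
    rw [Point.add_self_of_Y_ne hy3]
    refine some_eq_some _ _ ?_ ?_
    · rw [slope_of_Y_ne rfl hy3]
      simp only [WeierstrassCurve.Affine.negY, WeierstrassCurve.Affine.addX, W11]
      norm_num
    · rw [slope_of_Y_ne rfl hy3]
      simp only [WeierstrassCurve.Affine.negY, WeierstrassCurve.Affine.addY,
        WeierstrassCurve.Affine.negAddY, WeierstrassCurve.Affine.addX, W11]
      norm_num
  -- Q = 6P is of finite order if P is
  have hQfin : IsOfFinAddOrder (Point.some _ _ h6 : W11.Point) := by
    have h2f : IsOfFinAddOrder (Point.some _ _ h2 : W11.Point) := by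
      rw [← e2]; exact hfin.add hfin
    have h3f : IsOfFinAddOrder (Point.some _ _ h3 : W11.Point) := by
      rw [← e3]; exact h2f.add hfin
    rw [← e6]; exact h3f.add h3f
  -- v₂ of x(6P) = -4
  have v6 : padicValRat 2
      (2710039235354333119188061813933777 / 209242386338142624935394392168976) = -(2 * 2) := by
    have h : (2710039235354333119188061813933777 / 209242386338142624935394392168976 : ℚ) =
        (((2710039235354333119188061813933777 : ℤ) : ℚ) /
          ((2 : ℚ) ^ 4 * ((13077649146133914058462149510561 : ℤ) : ℚ))) := by
      norm_num
    rw [h, v2_eq_neg 4 (by norm_num [Int.odd_iff]) (by norm_num [Int.odd_iff])]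
    norm_num
  -- pigeonhole on powers of 2 modulo the order
  obtain ⟨n, hn, hnQ⟩ := isOfFinAddOrder_iff_nsmul_eq_zero.mp hQfin
  have hpg : ∃ k l : ℕ, k < l ∧ 2 ^ k % n = 2 ^ l % n := by
    have hmaps : ∀ a ∈ Finset.range (n + 1), 2 ^ a % n ∈ Finset.range n := by
      intro a _
      exact Finset.mem_range.mpr (Nat.mod_lt _ hn)
    obtain ⟨a, ha, b, hb, hab, heq⟩ :=
      Finset.exists_ne_map_eq_of_card_lt_of_maps_to (by simp) hmaps
    rcases lt_or_gt_of_ne hab with hlt | hlt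
    · exact ⟨a, b, hlt, heq⟩
    · exact ⟨b, a, hlt, heq.symm⟩
  obtain ⟨k, l, hkl, hmod⟩ := hpg
  have hle : (2 : ℕ) ^ k ≤ 2 ^ l := Nat.pow_le_pow_right (by norm_num) hkl.le
  have hdvd : n ∣ 2 ^ l - 2 ^ k := (Nat.modEq_iff_dvd' hle).mp hmod
  obtain ⟨t, ht⟩ := hdvd
  have hsum : (2 : ℕ) ^ l = 2 ^ k + n * t := by omega
  have heqQ : ((2 : ℕ) ^ l • Point.some _ _ h6 : W11.Point) = 2 ^ k • Point.some _ _ h6 := by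
    rw [hsum, add_nsmul, mul_nsmul, hnQ, nsmul_zero, add_zero]
  obtain ⟨xk, yk, hk, ek, vk⟩ := chain h6 v6 k
  obtain ⟨xl, yl, hl', el, vl⟩ := chain h6 v6 l
  have hxeq : xl = xk := by
    have := congrArg toX (el ▸ ek ▸ heqQ)
    simpa [toX] using this
  rw [hxeq, vk] at vl
  omega
end

section
/- The point P = (752/2401, 240/16807) lies on the elliptic curve Y² = X³ − (747/2401)X² − (1024/5764801)X + 764928/13841287201 over ℚ and has infinite order in the group of rational points of this curve. -/
/-- The elliptic curve `Y² = X³ - (747/2401)X² - (1024/5764801)X + 764928/13841287201` over `ℚ`. -/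
def W13 : WeierstrassCurve.Affine ℚ :=
  { a₁ := 0, a₂ := -747 / 2401, a₃ := 0, a₄ := -1024 / 5764801, a₆ := 764928 / 13841287201 }

namespace W13aux
open WeierstrassCurve.Affine
open WeierstrassCurve.Affine.Point

lemma a1 : W13.a₁ = 0 := rfl
lemma a2 : W13.a₂ = -747 / 2401 := rfl
lemma a3 : W13.a₃ = 0 := rfl
lemma a4 : W13.a₄ = -1024 / 5764801 := rfl
lemma a6 : W13.a₆ = 764928 / 13841287201 := rfl

lemma eq_iff (x y : ℚ) : W13.Equation x y ↔
    y ^ 2 = x ^ 3 - 747 / 2401 * x ^ 2 - 1024 / 5764801 * x + 764928 / 13841287201 := by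
  rw [WeierstrassCurve.Affine.equation_iff, a1, a2, a3, a4, a6]
  constructor <;> intro h <;> linear_combination h

lemma negY_eq (x y : ℚ) : W13.negY x y = -y := by
  rw [WeierstrassCurve.Affine.negY, a1, a3]; ring

lemma hPeq : W13.Equation (752 / 2401) (240 / 16807) := by
  rw [eq_iff]; norm_num

lemma hP : W13.Nonsingular (752 / 2401) (240 / 16807) := by
  rw [WeierstrassCurve.Affine.nonsingular_iff]
  refine ⟨hPeq, Or.inr ?_⟩
  rw [a1, a3]; norm_num

/-- If a point with x-coordinate `x` is twice another point, then `x - e` is a square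
for every root `e` of the cubic. -/
lemma sq_of_double {Q : W13.Point} {x y : ℚ} {h : W13.Nonsingular x y}
    (hd : Q + Q = Point.some _ _ h) {e : ℚ}
    (he : e ^ 3 - 747 / 2401 * e ^ 2 - 1024 / 5764801 * e + 764928 / 13841287201 = 0) :
    ∃ t : ℚ, x - e = t ^ 2 := by
  rcases Q with _ | @⟨u, v, hQ⟩
  · exact absurd hd.symm (some_ne_zero h)
  · by_cases hv : v = W13.negY u v
    · rw [add_self_of_Y_eq hv] at hd
      exact absurd hd.symm (some_ne_zero h)
    · rw [add_self_of_Y_ne hv] at hd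
      have hx : W13.addX u u (W13.slope u u v v) = x := by
        injection hd
      have hv0 : v ≠ 0 := by
        intro h0; apply hv; rw [negY_eq, h0]; ring
      have heq : v ^ 2 = u ^ 3 - 747 / 2401 * u ^ 2 - 1024 / 5764801 * u
          + 764928 / 13841287201 := (eq_iff u v).mp hQ.1
      rw [← hx, WeierstrassCurve.Affine.addX, a1, a2,
        slope_of_Y_ne rfl hv, negY_eq, a1, a2, a4]
      set A : ℚ := 3 * u ^ 2 + 2 * (-747 / 2401) * u + -1024 / 5764801 - 0 * v with hA
      set N : ℚ := (u - e) ^ 2 - (3 * e ^ 2 + 2 * (-747 / 2401) * e + -1024 / 5764801) with hN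
      have h2v : (2 * v) ≠ 0 := by simpa using hv0
      refine ⟨N / (2 * v), ?_⟩
      have key : A ^ 2 - (-747 / 2401 + 2 * u + e) * (2 * v) ^ 2 = N ^ 2 := by
        rw [hA, hN]
        linear_combination (-4 * (-747/2401 + 2*u + e)) * heq + (-4*e - 8*u + 2988/2401) * he
      have h4 : (2 * v) ^ 2 ≠ 0 := pow_ne_zero 2 h2v
      calc (A / (v - -v)) ^ 2 + 0 * (A / (v - -v)) - -747 / 2401 - u - u - e
          = (A ^ 2 - (-747 / 2401 + 2 * u + e) * (2 * v) ^ 2) / (2 * v) ^ 2 := by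
            rw [show v - -v = 2 * v by ring, eq_div_iff h4]
            field_simp
            ring
        _ = (N / (2 * v)) ^ 2 := by rw [key, div_pow]

/-- Classification of 2-torsion points. -/
lemma two_torsion {u v : ℚ} {h : W13.Nonsingular u v}
    (h2 : Point.some _ _ h + Point.some _ _ h = 0) :
    v = 0 ∧ (u = 32 / 2401 ∨ u = -32 / 2401 ∨ u = 747 / 2401) := by
  by_cases hv : v = W13.negY u v
  · have hv0 : v = 0 := by rw [negY_eq] at hv; linarith
    subst hv0
    have heq := (eq_iff u 0).mp h.1
    have hprod : (u - 32 / 2401) * (u + 32 / 2401) * (u - 747 / 2401) = 0 := by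
      linear_combination -heq
    refine ⟨rfl, ?_⟩
    rcases mul_eq_zero.mp hprod with h' | h'
    · rcases mul_eq_zero.mp h' with h'' | h''
      · exact Or.inl (by linarith)
      · exact Or.inr (Or.inl (by linarith))
    · exact Or.inr (Or.inr (by linarith))
  · rw [add_self_of_Y_ne hv] at h2
    exact absurd h2 (some_ne_zero _)

lemma exists_double_of_odd {X : W13.Point} {k : ℕ} (hk : Odd k) (hX : k • X = 0) :
    ∃ R : W13.Point, R + R = X := by
  obtain ⟨j, hj⟩ := hk
  refine ⟨(j + 1) • X, ?_⟩
  calc (j + 1) • X + (j + 1) • X = ((j + 1) + (j + 1)) • X := (add_nsmul X _ _).symm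
    _ = k • X + 1 • X := by rw [← add_nsmul]; congr 1; omega
    _ = X := by rw [hX, one_nsmul, zero_add]

lemma nonsq_nat {n : ℕ} (hn : ¬ IsSquare n) {t : ℚ} (ht : t ^ 2 = (n : ℚ) / 2401) : False := by
  apply hn
  rw [← Rat.isSquare_natCast_iff]
  exact ⟨49 * t, by linear_combination -2401 * ht⟩

lemma not_square_of_between {n a : ℕ} (h1 : a * a < n) (h2 : n < (a + 1) * (a + 1)) :
    ¬ IsSquare n := by
  rintro ⟨r, rfl⟩
  rcases le_or_gt r a with h | h
  · nlinarith
  · nlinarith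

lemma ns720 : ¬ IsSquare (720 : ℕ) := not_square_of_between (a := 26) (by norm_num) (by norm_num)

lemma ns715 : ¬ IsSquare (715 : ℕ) := not_square_of_between (a := 26) (by norm_num) (by norm_num)

lemma ns112112 : ¬ IsSquare (112112 : ℕ) :=
  not_square_of_between (a := 334) (by norm_num) (by norm_num)

theorem stmt13_aux : W13.Equation (752 / 2401) (240 / 16807) ∧
    ∃ h : W13.Nonsingular (752 / 2401) (240 / 16807),
      ¬ IsOfFinAddOrder (WeierstrassCurve.Affine.Point.some _ _ h) := by
  refine ⟨hPeq, hP, ?_⟩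
  intro hfin
  set P : W13.Point := Point.some _ _ hP with hPdef
  set n : ℕ := addOrderOf P with hndef
  have hnpos : 0 < n := hfin.addOrderOf_pos
  have hn0 : n • P = 0 := addOrderOf_nsmul_eq_zero P
  rcases Nat.even_or_odd n with hev | hodd
  · -- n even
    obtain ⟨m, hm⟩ := hev
    have hmpos : 0 < m := by omega
    set Q : W13.Point := m • P with hQdef
    have hQ2 : Q + Q = 0 := by
      rw [hQdef, ← add_nsmul, ← hm, hn0]
    have hQ0 : Q ≠ 0 := by
      intro h0
      have hdvd : n ∣ m := addOrderOf_dvd_of_nsmul_eq_zero (hQdef ▸ h0)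
      have := Nat.le_of_dvd hmpos hdvd
      omega
    rcases hQv : Q with _ | @⟨q, w, hqw⟩
    · exact hQ0 hQv
    · rw [hQv] at hQ2
      obtain ⟨hw0, hq⟩ := two_torsion hQ2
      subst hw0
      rcases Nat.even_or_odd m with hmev | hmodd
      · -- 4 ∣ n : a point of order 4 would exist
        obtain ⟨r, hr⟩ := hmev
        have hd : r • P + r • P = Point.some _ _ hqw := by
          rw [← add_nsmul, ← hr, ← hQdef, hQv]
        rcases hq with rfl | rfl | rfl
        · obtain ⟨t, ht⟩ := sq_of_double hd
            (e := 747 / 2401) (by norm_num)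
          nlinarith [sq_nonneg t]
        · obtain ⟨t, ht⟩ := sq_of_double hd
            (e := 32 / 2401) (by norm_num)
          nlinarith [sq_nonneg t]
        · obtain ⟨t, ht⟩ := sq_of_double hd
            (e := 32 / 2401) (by norm_num)
          exact nonsq_nat ns715 (by push_cast; linear_combination -ht)
      · -- n ≡ 2 mod 4 : consider S = P + Q, of odd order
        have hmQ : m • (Point.some _ _ hqw) = Point.some _ _ hqw := by
          obtain ⟨j, hj⟩ := hmodd
          have h2T : (2 : ℕ) • (Point.some _ _ hqw) = (0 : W13.Point) := by
            rw [two_nsmul, hQ2]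
          rw [hj, add_nsmul, one_nsmul, mul_nsmul (Point.some _ _ hqw) 2 j, h2T, nsmul_zero, zero_add]
        set S : W13.Point := P + Point.some _ _ hqw with hSdef
        have hmS : m • S = 0 := by
          rw [hSdef, nsmul_add, hmQ, ← hQdef, hQv, hQ2]
        have hkdvd : addOrderOf S ∣ m := addOrderOf_dvd_of_nsmul_eq_zero hmS
        have hkodd : Odd (addOrderOf S) := by
          rcases Nat.even_or_odd (addOrderOf S) with hke | hko
          · exfalso
            have h2k : 2 ∣ addOrderOf S := hke.two_dvd
            have h2m : 2 ∣ m := h2k.trans hkdvd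
            exact (Nat.not_odd_iff_even.mpr (even_iff_two_dvd.mpr h2m)) hmodd
          · exact hko
        obtain ⟨R, hR⟩ := exists_double_of_odd hkodd (addOrderOf_nsmul_eq_zero S)
        rcases hq with rfl | rfl | rfl
        · have hne : (752 / 2401 : ℚ) ≠ 32 / 2401 := by norm_num
          rw [hSdef, hPdef, add_of_X_ne hne] at hR
          obtain ⟨t, ht⟩ := sq_of_double hR (e := 32 / 2401) (by norm_num)
          rw [WeierstrassCurve.Affine.addX, a1, a2, slope_of_X_ne hne] at ht
          norm_num at ht
          nlinarith [sq_nonneg t]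
        · have hne : (752 / 2401 : ℚ) ≠ -32 / 2401 := by norm_num
          rw [hSdef, hPdef, add_of_X_ne hne] at hR
          obtain ⟨t, ht⟩ := sq_of_double hR (e := 32 / 2401) (by norm_num)
          rw [WeierstrassCurve.Affine.addX, a1, a2, slope_of_X_ne hne] at ht
          norm_num at ht
          nlinarith [sq_nonneg t]
        · have hne : (752 / 2401 : ℚ) ≠ 747 / 2401 := by norm_num
          rw [hSdef, hPdef, add_of_X_ne hne] at hR
          obtain ⟨t, ht⟩ := sq_of_double hR (e := 32 / 2401) (by norm_num)
          rw [WeierstrassCurve.Affine.addX, a1, a2, slope_of_X_ne hne] at ht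
          norm_num at ht
          exact nonsq_nat ns112112 (by push_cast; linear_combination -ht)
  · -- n odd
    obtain ⟨R, hR⟩ := exists_double_of_odd hodd hn0
    rw [hPdef] at hR
    obtain ⟨t, ht⟩ := sq_of_double hR (e := 32 / 2401) (by norm_num)
    exact nonsq_nat ns720 (by push_cast; linear_combination -ht)

end W13aux

/-- The point `P = (752/2401, 240/16807)` lies on the curve and has infinite order. -/
theorem stmt13 : W13.Equation (752 / 2401) (240 / 16807) ∧
    ∃ h : W13.Nonsingular (752 / 2401) (240 / 16807),
      ¬ IsOfFinAddOrder (WeierstrassCurve.Affine.Point.some _ _ h) :=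
  W13aux.stmt13_aux
end

section
/- The point P = (−77/2, 42) lies on the elliptic curve Y² = X³ + (81/2)X² − (2401/4)X − 194481/8 over ℚ and has infinite order in the group of rational points of this curve. -/
/-- The elliptic curve `Y² = X³ + (81/2)X² - (2401/4)X - 194481/8` over `ℚ`. -/
def W14 : WeierstrassCurve.Affine ℚ :=
  { a₁ := 0, a₂ := 81 / 2, a₃ := 0, a₄ := -2401 / 4, a₆ := -194481 / 8 }

namespace Aux14

open WeierstrassCurve.Affine

local notation "vv" => padicValRat 2

lemma vne_add_ne_zero {q r : ℚ} (hq : q ≠ 0) (h : vv q ≠ vv r) : q + r ≠ 0 := by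
  intro hqr
  have hr : r = -q := by linarith [hqr]
  rw [hr, padicValRat.neg] at h
  exact h rfl

lemma v_add_left {q r : ℚ} (hq : q ≠ 0) (hr : r ≠ 0) (h : vv q < vv r) : vv (q + r) = vv q :=
  padicValRat.add_eq_of_lt (p := 2) (vne_add_ne_zero hq h.ne) hq hr h

lemma v_odd_int (a : ℤ) (ha : ¬ (2:ℤ) ∣ a) : vv (a : ℚ) = 0 := by
  rw [padicValRat.of_int, padicValInt.eq_zero_of_not_dvd ha]; rfl

lemma v_two_pow (n : ℕ) : vv ((2:ℚ) ^ n) = n := by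
  rw [padicValRat.pow]
  have : vv (2:ℚ) = 1 := by
    simpa using padicValRat.self (p := 2) one_lt_two
  rw [this, mul_one]

lemma v_eval' (q : ℚ) (a b : ℤ) (n : ℕ) (ha : ¬ (2:ℤ) ∣ a) (hb : ¬ (2:ℤ) ∣ b)
    (hq : q = (a:ℚ) / ((b:ℚ) * 2 ^ n)) : vv q = -n := by
  have ha0 : (a:ℚ) ≠ 0 := Int.cast_ne_zero.2 (by rintro rfl; exact ha ⟨0, rfl⟩)
  have hb0 : (b:ℚ) ≠ 0 := Int.cast_ne_zero.2 (by rintro rfl; exact hb ⟨0, rfl⟩)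
  have h2 : ((2:ℚ) ^ n) ≠ 0 := pow_ne_zero _ two_ne_zero
  rw [hq, padicValRat.div ha0 (mul_ne_zero hb0 h2), padicValRat.mul hb0 h2,
    v_odd_int a ha, v_odd_int b hb, v_two_pow]
  ring

lemma W14_a₁ : W14.a₁ = 0 := rfl
lemma W14_a₂ : W14.a₂ = 81 / 2 := rfl
lemma W14_a₃ : W14.a₃ = 0 := rfl
lemma W14_a₄ : W14.a₄ = -2401 / 4 := rfl
lemma W14_a₆ : W14.a₆ = -194481 / 8 := rfl

lemma W14_negY (x y : ℚ) : W14.negY x y = -y := by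
  simp [WeierstrassCurve.Affine.negY, W14_a₁, W14_a₃]

lemma key {x y : ℚ} {m : ℤ} (hm : 3 ≤ m) (hx : x ≠ 0) (hy : y ≠ 0)
    (hvx : vv x = -(2*m)) (hvy : vv y = -(3*m)) (h : W14.Nonsingular x y) :
    ∃ (x' y' : ℚ) (h' : W14.Nonsingular x' y'),
      Point.some _ _ h + Point.some _ _ h = Point.some _ _ h' ∧ x' ≠ 0 ∧ y' ≠ 0 ∧
      vv x' = -(2*(m+1)) ∧ vv y' = -(3*(m+1)) := by
  have hy' : y ≠ W14.negY x y := by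
    rw [W14_negY]; intro hc; apply hy; linarith
  set L := W14.slope x x y y with hLdef
  -- numerator and denominator of the slope
  set N : ℚ := 3*x^2 + (81*x + -(2401/4)) with hNdef
  have hvB : vv (81*x) = -(2*m) := by
    rw [padicValRat.mul (by norm_num) hx, hvx]
    have h81 : vv (81:ℚ) = 0 := by simpa using v_odd_int 81 (by decide)
    rw [h81]; ring
  have hvC : vv (-(2401/4) : ℚ) = -2 := by
    have := v_eval' (-(2401/4) : ℚ) (-2401) 1 2 (by decide) (by decide) (by norm_num)
    simpa using this
  have hBC0 : (81*x + -(2401/4) : ℚ) ≠ 0 :=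
    vne_add_ne_zero (by positivity) (by rw [hvB, hvC]; intro hc; omega)
  have hvBC : vv (81*x + -(2401/4) : ℚ) = -(2*m) := by
    rw [v_add_left (by positivity) (by norm_num) (by rw [hvB, hvC]; omega), hvB]
  have hvA : vv (3*x^2) = -(4*m) := by
    rw [padicValRat.mul (by norm_num) (pow_ne_zero _ hx), padicValRat.pow, hvx]
    have h3 : vv (3:ℚ) = 0 := by simpa using v_odd_int 3 (by decide)
    rw [h3]; ring
  have hA0 : (3*x^2 : ℚ) ≠ 0 := by positivity
  have hN0 : N ≠ 0 := vne_add_ne_zero hA0 (by rw [hvA, hvBC]; intro hc; omega)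
  have hvN : vv N = -(4*m) := by
    rw [hNdef, v_add_left hA0 hBC0 (by rw [hvA, hvBC]; omega), hvA]
  have hD0 : (2*y : ℚ) ≠ 0 := by simp [hy]
  have hvD : vv (2*y) = 1 - 3*m := by
    have h2 : vv (2:ℚ) = 1 := by simpa using padicValRat.self (p := 2) one_lt_two
    rw [padicValRat.mul (by norm_num) hy, h2, hvy]; ring
  have hL : L = N / (2*y) := by
    rw [hLdef, slope_of_Y_ne rfl hy', W14_negY, W14_a₁, W14_a₂, W14_a₄, hNdef]
    congr 1 <;> ring
  have hL0 : L ≠ 0 := by rw [hL]; exact div_ne_zero hN0 hD0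
  have hvL : vv L = -(m+1) := by
    rw [hL, padicValRat.div hN0 hD0, hvN, hvD]; ring
  -- x' analysis
  have hX'eq : W14.addX x x L = L^2 + (-(2*x) + -(81/2)) := by
    rw [WeierstrassCurve.Affine.addX, W14_a₁, W14_a₂]; ring
  have hv2x : vv (-(2*x) : ℚ) = 1 - 2*m := by
    have h2 : vv (2:ℚ) = 1 := by simpa using padicValRat.self (p := 2) one_lt_two
    rw [padicValRat.neg, padicValRat.mul (by norm_num) hx, h2, hvx]; ring
  have hv81 : vv (-(81/2) : ℚ) = -1 := by
    have := v_eval' (-(81/2) : ℚ) (-81) 1 1 (by decide) (by decide) (by norm_num)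
    simpa using this
  have h2x0 : (-(2*x) : ℚ) ≠ 0 := by simp [hx]
  have hin0 : (-(2*x) + -(81/2) : ℚ) ≠ 0 :=
    vne_add_ne_zero h2x0 (by rw [hv2x, hv81]; omega)
  have hvin : vv (-(2*x) + -(81/2) : ℚ) = 1 - 2*m := by
    rw [v_add_left h2x0 (by norm_num) (by rw [hv2x, hv81]; omega), hv2x]
  have hvL2 : vv (L^2) = -(2*m+2) := by
    rw [padicValRat.pow, hvL]; ring
  have hX'0 : W14.addX x x L ≠ 0 := by
    rw [hX'eq]
    exact vne_add_ne_zero (pow_ne_zero _ hL0) (by rw [hvL2, hvin]; omega)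
  have hvX' : vv (W14.addX x x L) = -(2*(m+1)) := by
    rw [hX'eq, v_add_left (pow_ne_zero _ hL0) hin0 (by rw [hvL2, hvin]; omega), hvL2]; ring
  -- y' analysis
  have hY'eq : W14.addY x x y L = L * (-(W14.addX x x L) + x) + -y := by
    rw [WeierstrassCurve.Affine.addY, WeierstrassCurve.Affine.negAddY, W14_negY]; ring
  have hdiff0 : (-(W14.addX x x L) + x : ℚ) ≠ 0 := by
    refine vne_add_ne_zero (neg_ne_zero.mpr hX'0) ?_
    rw [padicValRat.neg, hvX', hvx]; omega
  have hvdiff : vv (-(W14.addX x x L) + x) = -(2*(m+1)) := by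
    rw [v_add_left (neg_ne_zero.mpr hX'0) hx (by rw [padicValRat.neg, hvX', hvx]; omega),
      padicValRat.neg, hvX']
  have hvLd : vv (L * (-(W14.addX x x L) + x)) = -(3*m+3) := by
    rw [padicValRat.mul hL0 hdiff0, hvL, hvdiff]; ring
  have hLd0 : L * (-(W14.addX x x L) + x) ≠ 0 := mul_ne_zero hL0 hdiff0
  have hY'0 : W14.addY x x y L ≠ 0 := by
    rw [hY'eq]
    refine vne_add_ne_zero hLd0 ?_
    rw [hvLd, padicValRat.neg, hvy]; omega
  have hvY' : vv (W14.addY x x y L) = -(3*(m+1)) := by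
    rw [hY'eq, v_add_left hLd0 (by simpa using hy) (by rw [hvLd, padicValRat.neg, hvy]; omega),
      hvLd]; ring
  exact ⟨W14.addX x x L, W14.addY x x y L, nonsingular_add h h fun hc => hy' hc.2,
    Point.add_self_of_Y_ne hy', hX'0, hY'0, hvX', hvY'⟩

end Aux14
namespace Aux14
open WeierstrassCurve.Affine

lemma some_eq_some' {x₁ y₁ x₂ y₂ : ℚ} (h₁ : W14.Nonsingular x₁ y₁) (hx : x₁ = x₂)
    (hy : y₁ = y₂) : ∃ h₂ : W14.Nonsingular x₂ y₂, Point.some _ _ h₁ = Point.some _ _ h₂ := by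
  subst hx; subst hy; exact ⟨h₁, rfl⟩

end Aux14

open WeierstrassCurve.Affine Aux14 in
/-- The point `P = (-77/2, 42)` lies on the curve and has infinite order. -/
theorem stmt14 : W14.Equation (-77 / 2) 42 ∧
    ∃ h : W14.Nonsingular (-77 / 2) 42,
      ¬ IsOfFinAddOrder (WeierstrassCurve.Affine.Point.some _ _ h) := by
  have heq : W14.Equation (-77 / 2) 42 := by
    rw [equation_iff, W14_a₁, W14_a₂, W14_a₃, W14_a₄, W14_a₆]; norm_num
  have hns : W14.Nonsingular (-77 / 2) 42 := by
    rw [nonsingular_iff, W14_a₁, W14_a₃]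
    exact ⟨heq, Or.inr (by norm_num)⟩
  refine ⟨heq, hns, fun hfin => ?_⟩
  -- first doubling : 2P = (2009/18, -36260/27)
  have hyne : (42 : ℚ) ≠ W14.negY (-77 / 2) 42 := by rw [W14_negY]; norm_num
  have hslope : W14.slope (-77/2) (-77/2) 42 42 = 26/3 := by
    rw [slope_of_Y_ne rfl hyne, W14_negY, W14_a₁, W14_a₂, W14_a₄]; norm_num
  have hx2 : W14.addX (-77/2) (-77/2) (W14.slope (-77/2) (-77/2) 42 42) = 2009/18 := by
    rw [hslope, WeierstrassCurve.Affine.addX, W14_a₁, W14_a₂]; norm_num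
  have hy2 : W14.addY (-77/2) (-77/2) 42 (W14.slope (-77/2) (-77/2) 42 42) = -36260/27 := by
    rw [WeierstrassCurve.Affine.addY, WeierstrassCurve.Affine.negAddY, W14_negY, hslope,
      WeierstrassCurve.Affine.addX, W14_a₁, W14_a₂]
    norm_num
  obtain ⟨h₂, hs2⟩ := some_eq_some' (nonsingular_add hns hns fun hc => hyne hc.2) hx2 hy2
  have hP2 : Point.some _ _ hns + Point.some _ _ hns = Point.some _ _ h₂ :=
    (Point.add_self_of_Y_ne hyne).trans hs2
  -- second doubling : 4P = (535967041/19713600, -8487621239311/87528384000)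
  have hyne₂ : (-36260/27 : ℚ) ≠ W14.negY (2009/18) (-36260/27) := by
    rw [W14_negY]; norm_num
  have hslope₂ : W14.slope (2009/18) (2009/18) (-36260/27) (-36260/27) = -25243/1480 := by
    rw [slope_of_Y_ne rfl hyne₂, W14_negY, W14_a₁, W14_a₂, W14_a₄]; norm_num
  have hx4 : W14.addX (2009/18) (2009/18)
      (W14.slope (2009/18) (2009/18) (-36260/27) (-36260/27)) = 535967041/19713600 := by
    rw [hslope₂, WeierstrassCurve.Affine.addX, W14_a₁, W14_a₂]; norm_num
  have hy4 : W14.addY (2009/18) (2009/18) (-36260/27)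
      (W14.slope (2009/18) (2009/18) (-36260/27) (-36260/27))
      = -8487621239311/87528384000 := by
    rw [WeierstrassCurve.Affine.addY, WeierstrassCurve.Affine.negAddY, W14_negY, hslope₂,
      WeierstrassCurve.Affine.addX, W14_a₁, W14_a₂]
    norm_num
  obtain ⟨h₄, hs4⟩ := some_eq_some' (nonsingular_add h₂ h₂ fun hc => hyne₂ hc.2) hx4 hy4
  have hP4 : Point.some _ _ h₂ + Point.some _ _ h₂ = Point.some _ _ h₄ :=
    (Point.add_self_of_Y_ne hyne₂).trans hs4
  have hQ : ((4 : ℕ) • Point.some _ _ hns : W14.Point) = Point.some _ _ h₄ := by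
    rw [show (4:ℕ) = 2*2 from rfl, mul_nsmul, two_nsmul (WeierstrassCurve.Affine.Point.some _ _ hns), hP2, two_nsmul, hP4]
  -- iteration
  have iter : ∀ k : ℕ, ∃ (x y : ℚ) (h' : W14.Nonsingular x y),
      ((2^k * 4 : ℕ) • Point.some _ _ hns : W14.Point) = Point.some _ _ h' ∧ x ≠ 0 ∧ y ≠ 0 ∧
      padicValRat 2 x = -(2*(3+(k:ℤ))) ∧ padicValRat 2 y = -(3*(3+(k:ℤ))) := by
    intro k
    induction k with
    | zero =>
      refine ⟨535967041/19713600, -8487621239311/87528384000, h₄, by simpa using hQ,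
        by norm_num, by norm_num, ?_, ?_⟩
      · have := v_eval' (535967041/19713600 : ℚ) 535967041 308025 6
          (by norm_num) (by norm_num) (by norm_num)
        rw [this]; norm_num
      · have := v_eval' (-8487621239311/87528384000 : ℚ) (-8487621239311) 170953875 9
          (by norm_num) (by norm_num) (by norm_num)
        rw [this]; norm_num
    | succ k ih =>
      obtain ⟨x, y, h', hk, hx0, hy0, hvx, hvy⟩ := ih
      obtain ⟨x', y', h'', hadd, hx0', hy0', hvx', hvy'⟩ :=
        key (m := 3 + (k:ℤ)) (by omega) hx0 hy0 (by rw [hvx]) (by rw [hvy]) h'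
      refine ⟨x', y', h'', ?_, hx0', hy0', ?_, ?_⟩
      · rw [show (2^(k+1)*4 : ℕ) = (2^k*4) * 2 by ring, mul_nsmul, hk, two_nsmul, hadd]
      · rw [hvx']; push_cast; ring
      · rw [hvy']; push_cast; ring
  -- injectivity of k ↦ (2^k * 4) • P
  have hinj : Function.Injective
      (fun k : ℕ => ((2^k * 4 : ℕ) • Point.some _ _ hns : W14.Point)) := by
    intro k l hkl
    obtain ⟨xk, yk, hk', ek, _, _, hvxk, _⟩ := iter k
    obtain ⟨xl, yl, hl', el, _, _, hvxl, _⟩ := iter l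
    simp only [] at hkl
    rw [ek, el] at hkl
    injection hkl with hxx hyy
    have hv : -(2*(3+(k:ℤ))) = -(2*(3+(l:ℤ))) := by rw [← hvxk, ← hvxl, hxx]
    have : (k:ℤ) = l := by omega
    exact_mod_cast this
  have hmem : ∀ k : ℕ,
      ((2^k * 4 : ℕ) • Point.some _ _ hns : W14.Point) ∈ AddSubmonoid.multiples (Point.some _ _ hns) :=
    fun k => (AddSubmonoid.mem_multiples_iff _ _).mpr ⟨2^k*4, rfl⟩
  exact Set.infinite_range_of_injective hinj
    ((hfin.finite_multiples).subset (Set.range_subset_iff.mpr hmem))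
end
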